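/- For every z ∈ ℍ with Im z ≥ 0.95 (so that E₂(z) ≠ 0 and h is holomorphic at z), the derivative of h satisfies |h'(z) - 1| < 0.89, where h'(z) = 1 + (6i/π)·E₂'(z)/E₂(z)². -/

import Mathlib

open Complex Real

/-- The weight 2 Eisenstein series `E₂(z) = 1 - 24 ∑_{n≥1} σ₁(n) e^{2πinz}`. -/
noncomputable def E₂ (z : ℂ) : ℂ :=
  1 - 24 * ∑' n : ℕ, (ArithmeticFunction.sigma 1 (n + 1) : ℂ) *
    Complex.exp (2 * (Real.pi : ℂ) * Complex.I * ((n : ℂ) + 1) * z)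

/-- The equivariant function `h(z) = z + (6/(πi))/E₂(z)`. -/
noncomputable def h (z : ℂ) : ℂ := z + (6 / ((Real.pi : ℂ) * Complex.I)) / E₂ z

/- ## Auxiliary definitions and lemmas -/

private noncomputable def gg (n : ℕ) (w : ℂ) : ℂ :=
  (ArithmeticFunction.sigma 1 (n + 1) : ℂ) *
    Complex.exp (2 * (Real.pi : ℂ) * Complex.I * ((n : ℂ) + 1) * w)

private noncomputable def gg' (n : ℕ) (w : ℂ) : ℂ :=
  (2 * (Real.pi : ℂ) * Complex.I * ((n : ℂ) + 1)) * gg n w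

private lemma E₂_eq (w : ℂ) : E₂ w = 1 - 24 * ∑' n : ℕ, gg n w := rfl

private lemma hasDerivAt_gg (n : ℕ) (w : ℂ) : HasDerivAt (gg n) (gg' n w) w := by
  have h1 : HasDerivAt (fun w : ℂ => (2 * (Real.pi : ℂ) * Complex.I * ((n : ℂ) + 1)) * w)
      (2 * (Real.pi : ℂ) * Complex.I * ((n : ℂ) + 1)) w := by
    simpa using (hasDerivAt_id w).const_mul (2 * (Real.pi : ℂ) * Complex.I * ((n : ℂ) + 1))
  have h2 := (h1.cexp).const_mul (ArithmeticFunction.sigma 1 (n + 1) : ℂ)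
  have heq : gg' n w
      = (ArithmeticFunction.sigma 1 (n + 1) : ℂ) *
        (Complex.exp (2 * (Real.pi : ℂ) * Complex.I * ((n : ℂ) + 1) * w) *
          (2 * (Real.pi : ℂ) * Complex.I * ((n : ℂ) + 1))) := by
    unfold gg' gg; ring
  rw [heq]
  exact h2

private lemma abs_gg (n : ℕ) (w : ℂ) :
    ‖gg n w‖ =
      (ArithmeticFunction.sigma 1 (n + 1) : ℝ) * Real.exp (-(2 * Real.pi * w.im)) ^ (n + 1) := by
  unfold gg
  rw [norm_mul, Complex.norm_natCast, Complex.norm_exp]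
  congr 1
  have h1 : (2 * (Real.pi : ℂ) * Complex.I * ((n : ℂ) + 1) * w).re
      = -(2 * Real.pi * ((n : ℝ) + 1) * w.im) := by
    simp [Complex.mul_re, Complex.mul_im]
  rw [h1, show -(2 * Real.pi * ((n : ℝ) + 1) * w.im)
      = ((n + 1 : ℕ) : ℝ) * (-(2 * Real.pi * w.im)) by push_cast; ring,
    Real.exp_nat_mul]

private lemma abs_gg' (n : ℕ) (w : ℂ) :
    ‖gg' n w‖ = 2 * Real.pi * ((n : ℝ) + 1) * ‖gg n w‖ := by
  unfold gg'
  rw [norm_mul]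
  congr 1
  rw [show ((n : ℂ) + 1) = ((n + 1 : ℕ) : ℂ) by push_cast; ring]
  simp only [norm_mul, Complex.norm_natCast, Complex.norm_I, Complex.norm_real, Real.norm_eq_abs,
    Complex.norm_two, abs_of_pos Real.pi_pos]
  push_cast
  ring

private lemma sigma_le_sq (m : ℕ) : ArithmeticFunction.sigma 1 m ≤ m ^ 2 := by
  rw [ArithmeticFunction.sigma_one_apply]
  calc ∑ d ∈ m.divisors, d ≤ ∑ d ∈ Finset.range (m + 1), d := by
        apply Finset.sum_le_sum_of_subset
        intro d hd
        rw [Nat.mem_divisors] at hd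
        exact Finset.mem_range.2 (Nat.lt_succ_of_le (Nat.le_of_dvd (Nat.pos_of_ne_zero hd.2) hd.1))
    _ ≤ m ^ 2 := by
        have hh := Finset.sum_range_id_mul_two (m + 1)
        simp at hh
        nlinarith [hh]

private lemma key_bound (m : ℕ) :
    (m + 1) * ArithmeticFunction.sigma 1 (m + 1) ≤ 8 ^ (m + 1) := by
  calc (m + 1) * ArithmeticFunction.sigma 1 (m + 1) ≤ (m + 1) * (m + 1) ^ 2 :=
        Nat.mul_le_mul_left _ (sigma_le_sq _)
    _ = (m + 1) ^ 3 := by ring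
    _ ≤ (2 ^ (m + 1)) ^ 3 := Nat.pow_le_pow_left (Nat.lt_two_pow_self (n := m + 1)).le 3
    _ = 8 ^ (m + 1) := by rw [← pow_mul, mul_comm, pow_mul]; norm_num

private lemma exp_lb : (390 : ℝ) ≤ Real.exp 5.969 := by
  have h6 : (403.42 : ℝ) ≤ Real.exp 6 := by
    have h1 : ((2.7182818283 : ℝ)) ^ 6 ≤ (Real.exp 1) ^ 6 :=
      pow_le_pow_left₀ (by norm_num) Real.exp_one_gt_d9.le 6
    rw [← Real.exp_nat_mul] at h1
    norm_num at h1 ⊢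
    linarith
  have heq : Real.exp 5.969 = Real.exp 6 * Real.exp (-0.031) := by
    rw [← Real.exp_add]; norm_num
  have hneg : (0.969 : ℝ) ≤ Real.exp (-0.031) := by
    have := Real.add_one_le_exp (-0.031 : ℝ)
    linarith
  rw [heq]
  nlinarith [Real.exp_pos (6 : ℝ)]

private lemma exp_bound : Real.exp (-(2 * Real.pi * 0.95)) ≤ 1 / 390 := by
  have h1 : Real.exp (-(2 * Real.pi * 0.95)) ≤ Real.exp (-5.969) := by
    apply Real.exp_le_exp.2
    have := Real.pi_gt_d6
    nlinarith
  refine h1.trans ?_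
  rw [Real.exp_neg, one_div]
  exact inv_anti₀ (by norm_num) exp_lb

private lemma rho_lt : 8 * Real.exp (-(2 * Real.pi * 0.9)) < 1 := by
  have h1 : Real.exp (-(2 * Real.pi * 0.9)) ≤ Real.exp (-5) := by
    apply Real.exp_le_exp.2
    nlinarith [Real.pi_gt_d6]
  have h5 : (2.7182818283 : ℝ) ^ 5 ≤ Real.exp 5 := by
    have h1' : ((2.7182818283 : ℝ)) ^ 5 ≤ (Real.exp 1) ^ 5 :=
      pow_le_pow_left₀ (by norm_num) Real.exp_one_gt_d9.le 5
    rw [← Real.exp_nat_mul] at h1'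
    norm_num at h1' ⊢
    linarith
  have h2 : Real.exp (-5 : ℝ) < 1 / 8 := by
    rw [Real.exp_neg]
    rw [inv_lt_comm₀ (Real.exp_pos 5) (by norm_num)]
    calc (1 / 8 : ℝ)⁻¹ = 8 := by norm_num
      _ < 2.7182818283 ^ 5 := by norm_num
      _ ≤ Real.exp 5 := h5
  linarith

private lemma rho_nonneg : 0 ≤ Real.exp (-(2 * Real.pi * 0.9)) := (Real.exp_pos _).le

/-- The explicit majorant sequence at the point `z`. -/
private noncomputable def tt (n : ℕ) : ℝ :=
  if n = 0 then 1 / 390 else if n = 1 then 6 * (1 / 390) ^ 2 else (8 / 390) ^ (n + 1)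

private lemma tt_nonneg (n : ℕ) : 0 ≤ tt n := by
  unfold tt; split_ifs <;> positivity

private lemma tt_le_geo (n : ℕ) : tt n ≤ (8 / 390 : ℝ) ^ (n + 1) := by
  unfold tt
  split_ifs with h0 h1
  · subst h0; norm_num
  · subst h1; norm_num
  · exact le_rfl

private lemma summable_geo : Summable (fun n : ℕ => ((8 : ℝ) / 390) ^ (n + 1)) := by
  simpa [pow_succ] using
    (summable_geometric_of_lt_one (r := (8 : ℝ) / 390) (by norm_num) (by norm_num)).mul_right
      ((8 : ℝ) / 390)

private lemma summable_tt : Summable tt :=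
  Summable.of_nonneg_of_le tt_nonneg tt_le_geo summable_geo

private lemma tsum_tt_le : ∑' n, tt n ≤ 0.002613 := by
  rw [Summable.tsum_eq_zero_add summable_tt,
    Summable.tsum_eq_zero_add ((summable_nat_add_iff 1).2 summable_tt)]
  have h2 : ∀ n : ℕ, tt (n + 1 + 1) = ((8 : ℝ) / 390) ^ (n + 3) := by
    intro n; simp [tt]
  rw [tsum_congr h2]
  have h3 : ∑' n : ℕ, ((8 : ℝ) / 390) ^ (n + 3) = (8 / 390) ^ 3 * (1 - 8 / 390)⁻¹ := by
    have h4 : ∀ n : ℕ, ((8 : ℝ) / 390) ^ (n + 3) = (8 / 390) ^ 3 * (8 / 390) ^ n := by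
      intro n; rw [pow_add]; ring
    rw [tsum_congr h4, tsum_mul_left,
      tsum_geometric_of_lt_one (by norm_num) (by norm_num)]
  rw [h3]
  simp only [tt]
  norm_num

/-- |h'(z) - 1| < 0.89 for Im z ≥ 0.95, where
h'(z) = 1 + (6i/π) E₂'(z)/E₂(z)². -/
theorem stmt_15 (z : ℂ) (hz : 0.95 ≤ z.im) :
    deriv h z = 1 + (6 * Complex.I / (Real.pi : ℂ)) * deriv E₂ z / (E₂ z) ^ 2 ∧
      ‖deriv h z - 1‖ < 0.89 := by
  have hπ : (0 : ℝ) < Real.pi := Real.pi_pos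
  -- the abbreviation for exp(-2π Im z)
  set r : ℝ := Real.exp (-(2 * Real.pi * z.im)) with hr_def
  have hr_pos : 0 < r := Real.exp_pos _
  have hr_le : r ≤ 1 / 390 := by
    refine le_trans ?_ exp_bound
    apply Real.exp_le_exp.2
    nlinarith
  -- per-term bounds at z
  have hle : ∀ n, ‖gg n z‖ ≤ tt n := by
    intro n
    rw [abs_gg]
    match n with
    | 0 =>
      have hσ : ArithmeticFunction.sigma 1 1 = 1 := by decide
      simp only [tt, if_pos rfl, hσ]
      push_cast
      rw [one_mul, pow_one]
      exact hr_le
    | 1 =>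
      have hσ : ArithmeticFunction.sigma 1 2 = 3 := by decide
      simp only [tt, hσ]
      norm_num
      nlinarith [pow_le_pow_left₀ hr_pos.le hr_le 2]
    | (n + 2) =>
      have hkey : (ArithmeticFunction.sigma 1 (n + 3) : ℝ) ≤ 8 ^ (n + 3) := by
        have h1 : ArithmeticFunction.sigma 1 (n + 3) ≤ (n + 3) * ArithmeticFunction.sigma 1 (n + 3) :=
          Nat.le_mul_of_pos_left _ (by omega)
        have h2 := key_bound (n + 2)
        have h3 : ArithmeticFunction.sigma 1 (n + 3) ≤ 8 ^ (n + 3) := le_trans h1 h2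
        exact_mod_cast h3
      have hrp : r ^ (n + 3) ≤ (1 / 390 : ℝ) ^ (n + 3) := pow_le_pow_left₀ hr_pos.le hr_le _
      have htt : tt (n + 2) = ((8 : ℝ) / 390) ^ (n + 3) := by simp [tt]
      rw [htt]
      calc (ArithmeticFunction.sigma 1 (n + 2 + 1) : ℝ) * r ^ (n + 2 + 1)
          ≤ 8 ^ (n + 3) * (1 / 390) ^ (n + 3) := by
            apply mul_le_mul hkey hrp (by positivity) (by positivity)
        _ = ((8 : ℝ) / 390) ^ (n + 3) := by rw [← mul_pow]; norm_num
  have hle' : ∀ n, ‖gg' n z‖ ≤ 2 * Real.pi * tt n := by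
    intro n
    rw [abs_gg', abs_gg]
    match n with
    | 0 =>
      have hσ : ArithmeticFunction.sigma 1 1 = 1 := by decide
      simp only [tt, if_pos rfl, hσ]
      push_cast
      rw [pow_one]
      nlinarith
    | 1 =>
      have hσ : ArithmeticFunction.sigma 1 2 = 3 := by decide
      simp only [tt, hσ]
      norm_num
      have h2 := pow_le_pow_left₀ hr_pos.le hr_le 2
      nlinarith
    | (n + 2) =>
      have h2 := key_bound (n + 2)
      have hkey : ((n : ℝ) + 2 + 1) * (ArithmeticFunction.sigma 1 (n + 3) : ℝ) ≤ 8 ^ (n + 3) := by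
        have : ((n + 3) * ArithmeticFunction.sigma 1 (n + 3) : ℕ) ≤ 8 ^ (n + 3) := h2
        calc ((n : ℝ) + 2 + 1) * (ArithmeticFunction.sigma 1 (n + 3) : ℝ)
            = (((n + 3) * ArithmeticFunction.sigma 1 (n + 3) : ℕ) : ℝ) := by push_cast; ring
          _ ≤ ((8 ^ (n + 3) : ℕ) : ℝ) := by exact_mod_cast this
          _ = 8 ^ (n + 3) := by push_cast; ring
      have hrp : r ^ (n + 3) ≤ (1 / 390 : ℝ) ^ (n + 3) := pow_le_pow_left₀ hr_pos.le hr_le _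
      have htt : tt (n + 2) = ((8 : ℝ) / 390) ^ (n + 3) := by simp [tt]
      rw [htt]
      calc 2 * Real.pi * ((n + 2 : ℕ) + 1 : ℝ) *
            ((ArithmeticFunction.sigma 1 (n + 2 + 1) : ℝ) * r ^ (n + 2 + 1))
          = 2 * Real.pi * (((n : ℝ) + 2 + 1) * (ArithmeticFunction.sigma 1 (n + 3) : ℝ)
              * r ^ (n + 3)) := by push_cast; ring
        _ ≤ 2 * Real.pi * (8 ^ (n + 3) * (1 / 390) ^ (n + 3)) := by
            apply mul_le_mul_of_nonneg_left _ (by positivity)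
            apply mul_le_mul hkey hrp (by positivity) (by positivity)
        _ = 2 * Real.pi * ((8 : ℝ) / 390) ^ (n + 3) := by rw [← mul_pow]; norm_num
  -- summability at z
  have hsum_norm : Summable (fun n => ‖gg n z‖) :=
    Summable.of_nonneg_of_le (fun n => norm_nonneg _) hle summable_tt
  have hsum_norm' : Summable (fun n => ‖gg' n z‖) :=
    Summable.of_nonneg_of_le (fun n => norm_nonneg _) hle' (summable_tt.mul_left _)
  have hsum_gg : Summable (fun n => gg n z) := by
    apply Summable.of_norm
    simpa using hsum_norm
  -- the derivative of the series via the preconnected-set theorem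
  set S' : ℂ := ∑' n, gg' n z with hS'_def
  have hzt : z ∈ {w : ℂ | (0.9 : ℝ) < w.im} := by
    simp only [Set.mem_setOf_eq]; linarith
  have hd : HasDerivAt (fun w => ∑' n : ℕ, gg n w) S' z := by
    apply hasDerivAt_tsum_of_isPreconnected
      (u := fun n => 2 * Real.pi * (8 * Real.exp (-(2 * Real.pi * 0.9))) ^ (n + 1))
      (g' := gg') (t := {w : ℂ | (0.9 : ℝ) < w.im})
    · apply Summable.mul_left
      simpa [pow_succ] using
        (summable_geometric_of_lt_one (by positivity) rho_lt).mul_right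
          (8 * Real.exp (-(2 * Real.pi * 0.9)))
    · exact isOpen_lt continuous_const Complex.continuous_im
    · exact (convex_halfSpace_im_gt (0.9 : ℝ)).isPreconnected
    · intro n y _
      exact hasDerivAt_gg n y
    · intro n y hy
      simp only [Set.mem_setOf_eq] at hy
      rw [abs_gg', abs_gg]
      have hkey : ((n : ℝ) + 1) * (ArithmeticFunction.sigma 1 (n + 1) : ℝ) ≤ 8 ^ (n + 1) := by
        have h2 := key_bound n
        calc ((n : ℝ) + 1) * (ArithmeticFunction.sigma 1 (n + 1) : ℝ)
            = (((n + 1) * ArithmeticFunction.sigma 1 (n + 1) : ℕ) : ℝ) := by push_cast; ring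
          _ ≤ ((8 ^ (n + 1) : ℕ) : ℝ) := by exact_mod_cast h2
          _ = 8 ^ (n + 1) := by push_cast; ring
      have hexp : Real.exp (-(2 * Real.pi * y.im)) ≤ Real.exp (-(2 * Real.pi * 0.9)) := by
        apply Real.exp_le_exp.2
        nlinarith
      have hrp : Real.exp (-(2 * Real.pi * y.im)) ^ (n + 1)
          ≤ Real.exp (-(2 * Real.pi * 0.9)) ^ (n + 1) :=
        pow_le_pow_left₀ (Real.exp_pos _).le hexp _
      calc 2 * Real.pi * ((n : ℝ) + 1) *
            ((ArithmeticFunction.sigma 1 (n + 1) : ℝ) * Real.exp (-(2 * Real.pi * y.im)) ^ (n + 1))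
          = 2 * Real.pi * (((n : ℝ) + 1) * (ArithmeticFunction.sigma 1 (n + 1) : ℝ)
              * Real.exp (-(2 * Real.pi * y.im)) ^ (n + 1)) := by ring
        _ ≤ 2 * Real.pi * (8 ^ (n + 1) * Real.exp (-(2 * Real.pi * 0.9)) ^ (n + 1)) := by
            apply mul_le_mul_of_nonneg_left _ (by positivity)
            apply mul_le_mul hkey hrp (by positivity) (by positivity)
        _ = 2 * Real.pi * (8 * Real.exp (-(2 * Real.pi * 0.9))) ^ (n + 1) := by
            rw [mul_pow]
    · exact hzt
    · exact hsum_gg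
    · exact hzt
  -- derivative of E₂
  have hE : HasDerivAt E₂ (-(24 * S')) z := by
    have h1 := (hd.const_mul (24 : ℂ)).const_sub 1
    have h2 : E₂ = fun w => 1 - 24 * ∑' n : ℕ, gg n w := funext E₂_eq
    rw [h2]
    exact h1
  have hdE₂ : deriv E₂ z = -(24 * S') := hE.deriv
  -- bounds on the sums
  have hS : ‖∑' n, gg n z‖ ≤ 0.002613 := by
    have h1 : ‖∑' n, gg n z‖ ≤ ∑' n, ‖gg n z‖ := by
      apply norm_tsum_le_tsum_norm
      simpa using hsum_norm
    refine h1.trans ?_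
    have h2 : ∑' n, ‖gg n z‖ ≤ ∑' n, tt n := by
      apply Summable.tsum_le_tsum _ _ summable_tt
      · intro n; exact hle n
      · simpa using hsum_norm
    exact h2.trans tsum_tt_le
  have hS' : ‖S'‖ ≤ 2 * Real.pi * 0.002613 := by
    have h1 : ‖S'‖ ≤ ∑' n, ‖gg' n z‖ := by
      apply norm_tsum_le_tsum_norm
      simpa using hsum_norm'
    refine h1.trans ?_
    have h2 : ∑' n, ‖gg' n z‖ ≤ ∑' n, 2 * Real.pi * tt n := by
      apply Summable.tsum_le_tsum _ _ (summable_tt.mul_left _)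
      · intro n; exact hle' n
      · simpa using hsum_norm'
    refine h2.trans ?_
    rw [tsum_mul_left]
    exact mul_le_mul_of_nonneg_left tsum_tt_le (by positivity)
  -- lower bound on |E₂ z|
  have hE₂sub : ‖E₂ z - 1‖ ≤ 24 * 0.002613 := by
    have h1 : E₂ z - 1 = -(24 * ∑' n, gg n z) := by rw [E₂_eq]; ring
    rw [h1, norm_neg, norm_mul]
    have h24 : ‖(24 : ℂ)‖ = 24 := by
      rw [show (24 : ℂ) = ((24 : ℝ) : ℂ) by norm_num, Complex.norm_real]
      norm_num
    rw [h24]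
    nlinarith
  have hE₂lb : (0.937 : ℝ) ≤ ‖E₂ z‖ := by
    have h1 : ‖(1 - E₂ z) + E₂ z‖ ≤ ‖1 - E₂ z‖ + ‖E₂ z‖ :=
      norm_add_le _ _
    have h2 : ‖(1 - E₂ z) + E₂ z‖ = 1 := by norm_num
    have h3 : ‖1 - E₂ z‖ = ‖E₂ z - 1‖ := by
      rw [← norm_neg]; congr 1; ring
    rw [h2, h3] at h1
    linarith
  have hE₂ne : E₂ z ≠ 0 := by
    intro hcon
    rw [hcon] at hE₂lb
    simp at hE₂lb
    linarith
  -- derivative of h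
  have hder : HasDerivAt h
      (1 + (0 * E₂ z - 6 / ((Real.pi : ℂ) * Complex.I) * -(24 * S')) / E₂ z ^ 2) z := by
    have hdiv := (hasDerivAt_const z ((6 : ℂ) / ((Real.pi : ℂ) * Complex.I))).div hE hE₂ne
    have := (hasDerivAt_id z).add hdiv
    have hh : h = fun w => w + 6 / ((Real.pi : ℂ) * Complex.I) / E₂ w := rfl
    rw [hh]
    exact this
  have hπC : ((Real.pi : ℂ)) ≠ 0 := Complex.ofReal_ne_zero.2 (ne_of_gt hπ)
  have part1 : deriv h z = 1 + (6 * Complex.I / (Real.pi : ℂ)) * deriv E₂ z / (E₂ z) ^ 2 := by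
    rw [hder.deriv, hdE₂]
    have hcval : (6 : ℂ) / ((Real.pi : ℂ) * Complex.I) = -(6 * Complex.I / (Real.pi : ℂ)) := by
      rw [div_mul_eq_div_div, div_I]
      ring
    rw [hcval]
    ring
  refine ⟨part1, ?_⟩
  -- numerical estimate
  rw [part1]
  have habs : ‖1 + (6 * Complex.I / (Real.pi : ℂ)) * deriv E₂ z / (E₂ z) ^ 2 - 1‖
      = 6 / Real.pi * ‖deriv E₂ z‖ / ‖E₂ z‖ ^ 2 := by
    rw [show (1 : ℂ) + (6 * Complex.I / (Real.pi : ℂ)) * deriv E₂ z / (E₂ z) ^ 2 - 1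
        = (6 * Complex.I / (Real.pi : ℂ)) * deriv E₂ z / (E₂ z) ^ 2 by ring]
    rw [norm_div, norm_mul, norm_div, norm_mul, norm_pow, Complex.norm_I, Complex.norm_real,
      Real.norm_eq_abs, abs_of_pos hπ]
    have h6 : ‖(6 : ℂ)‖ = 6 := by
      rw [show (6 : ℂ) = ((6 : ℝ) : ℂ) by norm_num, Complex.norm_real]; norm_num
    rw [h6, mul_one]
  rw [habs]
  have hD : ‖deriv E₂ z‖ ≤ 48 * Real.pi * 0.002613 := by
    rw [hdE₂, norm_neg, norm_mul]
    have h24 : ‖(24 : ℂ)‖ = 24 := by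
      rw [show (24 : ℂ) = ((24 : ℝ) : ℂ) by norm_num, Complex.norm_real]; norm_num
    rw [h24]
    nlinarith
  have hB2 : (0.937 : ℝ) ^ 2 ≤ ‖E₂ z‖ ^ 2 := by
    apply pow_le_pow_left₀ (by norm_num) hE₂lb
  have hfinal : 6 / Real.pi * ‖deriv E₂ z‖ / ‖E₂ z‖ ^ 2
      ≤ 6 / Real.pi * (48 * Real.pi * 0.002613) / 0.937 ^ 2 := by
    apply div_le_div₀ (by positivity) _ (by norm_num) hB2
    apply mul_le_mul_of_nonneg_left hD (by positivity)
  refine lt_of_le_of_lt hfinal ?_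
  have heq : 6 / Real.pi * (48 * Real.pi * 0.002613) = 288 * 0.002613 := by
    field_simp
    ring
  rw [heq]
  norm_num
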